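/- For the degree-approximation algorithm: let y_{i,j} be the indicator that |V_{i,j} ∩ Γ(v)| is odd, where each neighbor u independently satisfies u ∈ V_{i,j} (i.e., r_i(u) > j) with probability 2^{-j}. Then for each i, P(y_{i,j} = 1) = (1 − (1 − 2^{-j+1})^{d})/2 where d = deg(v). Consequently E[SUM(j,v)] = a·(1 − (1 − 2^{-j+1})^{d})/2 where SUM(j,v) = Σ_{i=1}^{a} y_{i,j}. -/

import Mathlib

open MeasureTheory ProbabilityTheory

/-- A coin that comes up `true` with probability `2^{-j}`. -/
noncomputable def bernTwoPow (j : ℕ) : Measure Bool :=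
  (PMF.bernoulli ((1 / 2 : NNReal) ^ j) (pow_le_one₀ (by norm_num) (by norm_num))).toMeasure

instance (j : ℕ) : IsProbabilityMeasure (bernTwoPow j) := by
  unfold bernTwoPow; infer_instance

namespace DegAux

noncomputable def massR (p : ℝ) (b : Bool) : ℝ := if b then p else 1 - p

lemma massR_nonneg {p : ℝ} (h0 : 0 ≤ p) (h1 : p ≤ 1) (b : Bool) : 0 ≤ massR p b := by
  cases b <;> simp [massR] <;> linarith

lemma sum_prod_fn {ι X : Type*} [Fintype ι] [DecidableEq ι] [Fintype X]
    (h : ι → X → ℝ) :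
    ∑ η : ι → X, ∏ i, h i (η i) = ∏ i, ∑ x, h i x :=
  (Fintype.prod_sum fun i x => h i x).symm

lemma bern_singleton (j : ℕ) (b : Bool) :
    bernTwoPow j {b} = ENNReal.ofReal (massR ((1/2 : ℝ) ^ j) b) := by
  rw [bernTwoPow, PMF.toMeasure_apply_singleton _ _ (measurableSet_singleton b)]
  have hhalf : ENNReal.ofReal ((1:ℝ)/2) = 1/2 := by
    rw [ENNReal.ofReal_div_of_pos two_pos, ENNReal.ofReal_one, ENNReal.ofReal_ofNat]
  have hofp : ((1/2 : ENNReal)) ^ j = ENNReal.ofReal ((1/2 : ℝ) ^ j) := by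
    rw [ENNReal.ofReal_pow (by norm_num), hhalf]
  have hp : (0:ℝ) ≤ (1/2 : ℝ) ^ j := by positivity
  cases b
  · show (((1 - (1/2 : NNReal) ^ j : NNReal)) : ENNReal) = ENNReal.ofReal (massR ((1/2 : ℝ) ^ j) false)
    rw [massR, if_neg (by simp), ← ENNReal.ofReal_coe_nnreal,
      NNReal.coe_sub (pow_le_one₀ (by norm_num) (by norm_num))]
    simp
  · show ((((1/2 : NNReal) ^ j : NNReal)) : ENNReal) = ENNReal.ofReal (massR ((1/2 : ℝ) ^ j) true)
    rw [massR, if_pos rfl, ← ENNReal.ofReal_coe_nnreal]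
    simp

lemma pi_singleton {ι : Type*} [Fintype ι] (μ : ι → Measure Bool)
    [∀ i, SigmaFinite (μ i)] (ω : ι → Bool) :
    Measure.pi μ {ω} = ∏ i, μ i {ω i} := by
  rw [← Set.univ_pi_singleton ω, Measure.pi_pi]

lemma measure_set_eq_sum {α : Type*} [Fintype α] [MeasurableSpace α]
    [MeasurableSingletonClass α] (μ : Measure α) (S : Set α) [DecidablePred (· ∈ S)] :
    μ S = ∑ x : α, if x ∈ S then μ {x} else 0 := by
  have hS : S = ⋃ x ∈ Finset.univ.filter (· ∈ S), ({x} : Set α) := by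
    ext y; simp
  conv_lhs => rw [hS]
  rw [measure_biUnion_finset]
  · rw [Finset.sum_filter]
  · intro x _ y _ hxy
    simp [Set.disjoint_singleton, hxy]
  · intros; exact measurableSet_singleton _

lemma sum_odd_prod {Γ : Type*} [Fintype Γ] [DecidableEq Γ] (p : ℝ) :
    ∑ ξ : Γ → Bool, (if Odd (Finset.univ.filter (fun u => ξ u = true)).card
        then ∏ u, massR p (ξ u) else 0)
      = (1 - (1 - 2 * p) ^ Fintype.card Γ) / 2 := by
  classical
  have h1 : ∑ ξ : Γ → Bool, ∏ u, massR p (ξ u) = 1 := by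
    rw [sum_prod_fn (fun (_ : Γ) (x : Bool) => massR p x)]
    simp [massR]
  have h2 : ∑ ξ : Γ → Bool,
      (-1 : ℝ) ^ (Finset.univ.filter (fun u => ξ u = true)).card * ∏ u, massR p (ξ u)
      = (1 - 2 * p) ^ Fintype.card Γ := by
    have key : ∀ ξ : Γ → Bool,
        (-1 : ℝ) ^ (Finset.univ.filter (fun u => ξ u = true)).card * ∏ u, massR p (ξ u)
        = ∏ u, (if ξ u = true then -p else 1 - p) := by
      intro ξ
      have hsgn : (-1 : ℝ) ^ (Finset.univ.filter (fun u => ξ u = true)).card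
          = ∏ u, (if ξ u = true then (-1 : ℝ) else 1) := by
        rw [← Finset.prod_const, Finset.prod_filter]
      rw [hsgn, ← Finset.prod_mul_distrib]
      refine Finset.prod_congr rfl fun u _ => ?_
      cases hu : ξ u <;> simp [massR]
    rw [Finset.sum_congr rfl fun ξ _ => key ξ,
      sum_prod_fn (fun (_ : Γ) (x : Bool) => if x = true then -p else 1 - p)]
    simp [Finset.prod_const]
    ring_nf
  have key2 : ∀ ξ : Γ → Bool,
      (if Odd (Finset.univ.filter (fun u => ξ u = true)).card
        then ∏ u, massR p (ξ u) else 0)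
      = ((∏ u, massR p (ξ u)) -
          (-1 : ℝ) ^ (Finset.univ.filter (fun u => ξ u = true)).card * ∏ u, massR p (ξ u)) / 2 := by
    intro ξ
    by_cases h : Odd (Finset.univ.filter (fun u => ξ u = true)).card
    · rw [if_pos h, h.neg_one_pow]; ring
    · rw [if_neg h, (Nat.not_odd_iff_even.mp h).neg_one_pow]; ring
  rw [Finset.sum_congr rfl fun ξ _ => key2 ξ, ← Finset.sum_div, Finset.sum_sub_distrib, h1, h2]

lemma pi_bern_singleton (j : ℕ) {ι : Type*} [Fintype ι] (ω : ι → Bool) :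
    Measure.pi (fun _ : ι => bernTwoPow j) {ω}
      = ENNReal.ofReal (∏ c, DegAux.massR ((1/2 : ℝ) ^ j) (ω c)) := by
  have hp0 : (0:ℝ) ≤ (1/2 : ℝ) ^ j := by positivity
  have hp1 : ((1/2 : ℝ)) ^ j ≤ 1 := pow_le_one₀ (by norm_num) (by norm_num)
  rw [DegAux.pi_singleton (fun _ : ι => bernTwoPow j) ω,
    ENNReal.ofReal_prod_of_nonneg (fun c _ => DegAux.massR_nonneg hp0 hp1 (ω c))]
  exact Finset.prod_congr rfl fun c _ => DegAux.bern_singleton j (ω c)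

end DegAux

/-- Each of the `d = deg(v)` neighbors independently lies in `V_{i,j}`
with probability `2^{-j}`; `y_{i,j}` is the indicator that `|V_{i,j} ∩ Γ(v)|` is
odd.  Then `P(y_{i,j} = 1) = (1 − (1 − 2^{-j+1})^d)/2`, and consequently
`E[SUM(j,v)] = a·(1 − (1 − 2^{-j+1})^d)/2` where `SUM(j,v) = Σ_{i=1}^a y_{i,j}`. -/
theorem degree_approx_parity_expectation (Γ : Type*) [Fintype Γ] (d a j : ℕ)
    (hd : d = Fintype.card Γ) (hd1 : 1 ≤ d) (hj : 1 ≤ j) (ha : 1 ≤ a) :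
    (Measure.pi fun _ : Γ => bernTwoPow j)
        {ω | Odd (Finset.univ.filter (fun u : Γ => ω u = true)).card}
      = ENNReal.ofReal ((1 - (1 - (2 : ℝ) ^ (1 - (j : ℝ))) ^ d) / 2) ∧
    (∫ ω : Fin a × Γ → Bool,
        ((Finset.univ.filter (fun i : Fin a =>
          Odd (Finset.univ.filter (fun u : Γ => ω (i, u) = true)).card)).card : ℝ)
        ∂(Measure.pi fun _ : Fin a × Γ => bernTwoPow j))
      = (a : ℝ) * ((1 - (1 - (2 : ℝ) ^ (1 - (j : ℝ))) ^ d) / 2) := by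
  classical
  set p : ℝ := (1/2 : ℝ) ^ j with hp
  have hp0 : (0:ℝ) ≤ p := by positivity
  have hp1 : p ≤ 1 := by
    rw [hp]; exact pow_le_one₀ (by norm_num) (by norm_num)
  have hrpow : (2 : ℝ) ^ (1 - (j : ℝ)) = 2 * p := by
    rw [Real.rpow_sub two_pos, Real.rpow_one, Real.rpow_natCast, hp, one_div, inv_pow]
    ring
  have h2p : (1 - (2 : ℝ) ^ (1 - (j : ℝ))) = 1 - 2 * p := by rw [hrpow]
  constructor
  · -- part 1
    rw [DegAux.measure_set_eq_sum]
    have : ∀ ω : Γ → Bool,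
        (if ω ∈ {ω : Γ → Bool | Odd (Finset.univ.filter (fun u : Γ => ω u = true)).card}
          then Measure.pi (fun _ : Γ => bernTwoPow j) {ω} else 0)
        = ENNReal.ofReal (if Odd (Finset.univ.filter (fun u : Γ => ω u = true)).card
            then ∏ u, DegAux.massR p (ω u) else 0) := by
      intro ω
      simp only [Set.mem_setOf_eq]
      by_cases h : Odd (Finset.univ.filter (fun u : Γ => ω u = true)).card
      · rw [if_pos h, if_pos h, DegAux.pi_bern_singleton]
      · rw [if_neg h, if_neg h, ENNReal.ofReal_zero]
    rw [Finset.sum_congr rfl fun ω _ => this ω,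
      ← ENNReal.ofReal_sum_of_nonneg (fun ω _ => by
        split
        · exact Finset.prod_nonneg fun u _ => DegAux.massR_nonneg hp0 hp1 _
        · exact le_rfl),
      DegAux.sum_odd_prod, h2p, hd]
  · -- part 2
    set q : ℝ := (1 - (1 - 2 * p) ^ Fintype.card Γ) / 2 with hq
    have hμ : ∀ ω : Fin a × Γ → Bool,
        ((Measure.pi (fun _ : Fin a × Γ => bernTwoPow j)) {ω}).toReal
          = ∏ c, DegAux.massR p (ω c) := by
      intro ω
      rw [DegAux.pi_bern_singleton, ENNReal.toReal_ofReal]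
      exact Finset.prod_nonneg fun c _ => DegAux.massR_nonneg hp0 hp1 (ω c)
    rw [MeasureTheory.integral_fintype .of_finite]; simp only [measureReal_def]
    have hstep : ∀ ω : Fin a × Γ → Bool,
        ((Measure.pi (fun _ : Fin a × Γ => bernTwoPow j)) {ω}).toReal •
          ((Finset.univ.filter (fun i : Fin a =>
            Odd (Finset.univ.filter (fun u : Γ => ω (i, u) = true)).card)).card : ℝ)
        = ∑ i : Fin a, (∏ c, DegAux.massR p (ω c)) *
            (if Odd (Finset.univ.filter (fun u : Γ => ω (i, u) = true)).card then (1:ℝ) else 0) := by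
      intro ω
      rw [hμ, smul_eq_mul, ← Finset.mul_sum]
      congr 1
      rw [Finset.card_filter]
      push_cast
      rfl
    rw [Finset.sum_congr rfl fun ω _ => hstep ω, Finset.sum_comm]
    have hinner : ∀ i : Fin a,
        ∑ ω : Fin a × Γ → Bool, (∏ c, DegAux.massR p (ω c)) *
            (if Odd (Finset.univ.filter (fun u : Γ => ω (i, u) = true)).card then (1:ℝ) else 0)
        = q := by
      intro i
      -- reindex by currying
      rw [← Equiv.sum_comp (Equiv.curry (Fin a) Γ Bool).symm]
      have hterm : ∀ η : Fin a → Γ → Bool,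
          (∏ c : Fin a × Γ, DegAux.massR p (((Equiv.curry (Fin a) Γ Bool).symm η) c)) *
            (if Odd (Finset.univ.filter
                (fun u : Γ => ((Equiv.curry (Fin a) Γ Bool).symm η) (i, u) = true)).card
              then (1:ℝ) else 0)
          = ∏ i' : Fin a, ((∏ u, DegAux.massR p (η i' u)) *
              (if i' = i then
                (if Odd (Finset.univ.filter (fun u : Γ => η i' u = true)).card then (1:ℝ) else 0)
              else 1)) := by
        intro η
        rw [Finset.prod_mul_distrib, Finset.prod_ite_eq' Finset.univ i, if_pos (Finset.mem_univ i)]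
        congr 1
        rw [Fintype.prod_prod_type]
        rfl
      rw [Finset.sum_congr rfl fun η _ => hterm η,
        DegAux.sum_prod_fn (fun (i' : Fin a) (ξ : Γ → Bool) =>
          (∏ u, DegAux.massR p (ξ u)) *
          (if i' = i then
            (if Odd (Finset.univ.filter (fun u : Γ => ξ u = true)).card then (1:ℝ) else 0)
          else 1))]
      have hG : ∑ ξ : Γ → Bool, ∏ u, DegAux.massR p (ξ u) = 1 := by
        rw [DegAux.sum_prod_fn (fun (_ : Γ) (x : Bool) => DegAux.massR p x)]
        simp [DegAux.massR]
      have hGq : ∑ ξ : Γ → Bool, (∏ u, DegAux.massR p (ξ u)) *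
          (if Odd (Finset.univ.filter (fun u : Γ => ξ u = true)).card then (1:ℝ) else 0) = q := by
        rw [hq, ← DegAux.sum_odd_prod p]
        refine Finset.sum_congr rfl fun ξ _ => ?_
        by_cases h : Odd (Finset.univ.filter (fun u : Γ => ξ u = true)).card <;> simp [h]
      have : ∀ i' : Fin a,
          ∑ ξ : Γ → Bool, ((∏ u, DegAux.massR p (ξ u)) *
            (if i' = i then
              (if Odd (Finset.univ.filter (fun u : Γ => ξ u = true)).card then (1:ℝ) else 0)
            else 1))
          = if i' = i then q else 1 := by
        intro i'
        by_cases h : i' = i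
        · simp only [if_pos h]; exact hGq
        · simp only [if_neg h, mul_one]; exact hG
      rw [Finset.prod_congr rfl fun i' _ => this i', Finset.prod_ite_eq' Finset.univ i,
        if_pos (Finset.mem_univ i)]
    rw [Finset.sum_congr rfl fun i _ => hinner i, Finset.sum_const, Finset.card_univ,
      Fintype.card_fin, nsmul_eq_mul, hq, h2p, hd]
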